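/- arXiv:1807.06921 — 4 statements merged into one kernel-verified Lean document; each statement's English description precedes it below -/
import Mathlib

section
/- In a path with n nodes all having threshold 1, for any time bound λ ≥ 1, the minimum total incentive needed so that every node is influenced within λ rounds equals ⌈n/(2λ+1)⌉. -/
open Finset

/-- Path adjacency on ℕ: `u` and `v` are consecutive. -/
def pAdj (u v : ℕ) : Prop := u + 1 = v ∨ v + 1 = u

instance : DecidableRel pAdj := fun u v => by unfold pAdj; infer_instance

/-- Influence process on the node set `S` of a path, thresholds `t`, incentives `p`:
at round 0 exactly the nodes with `p v = t v` are influenced; afterwards a node is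
influenced once the number of already influenced neighbours reaches `t v - p v`. -/
def infl (S : Finset ℕ) (t p : ℕ → ℕ) : ℕ → Finset ℕ
  | 0 => S.filter fun v => p v = t v
  | ℓ + 1 => infl S t p ℓ ∪ S.filter fun v =>
      t v - p v ≤ ((infl S t p ℓ).filter fun u => pAdj u v).card

lemma infl_char (n : ℕ) (p : ℕ → ℕ) (hp : ∀ v < n, p v ≤ 1) (ℓ : ℕ) :
    infl (range n) (fun _ => 1) p ℓ =
      (range n).filter (fun v => ∃ s, s < n ∧ p s = 1 ∧ v ≤ s + ℓ ∧ s ≤ v + ℓ) := by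
  induction ℓ with
  | zero =>
    ext v
    simp only [infl, mem_filter, mem_range]
    constructor
    · rintro ⟨hv, hpv⟩; exact ⟨hv, v, hv, hpv, by omega, by omega⟩
    · rintro ⟨hv, s, hs, hps, h1, h2⟩
      have : s = v := by omega
      exact ⟨hv, this ▸ hps⟩
  | succ ℓ ih =>
    ext v
    simp only [infl, mem_union, mem_filter, mem_range]
    rw [ih]
    constructor
    · rintro (h | ⟨hv, hcard⟩)
      · simp only [mem_filter, mem_range] at h
        obtain ⟨hv, s, hs, hps, h1, h2⟩ := h
        exact ⟨hv, s, hs, hps, by omega, by omega⟩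
      · by_cases hpv : p v = 1
        · exact ⟨hv, v, hv, hpv, by omega, by omega⟩
        · have hpv0 : p v = 0 := by have := hp v hv; omega
          have hc : 0 < (((range n).filter (fun w => ∃ s, s < n ∧ p s = 1 ∧ w ≤ s + ℓ ∧ s ≤ w + ℓ)).filter fun u => pAdj u v).card := by
            omega
          obtain ⟨u, hu⟩ := card_pos.mp hc
          simp only [mem_filter, mem_range] at hu
          obtain ⟨⟨hun, s, hs, hps, h1, h2⟩, hadj⟩ := hu
          rcases hadj with h | h
          · exact ⟨hv, s, hs, hps, by omega, by omega⟩
          · exact ⟨hv, s, hs, hps, by omega, by omega⟩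
    · rintro ⟨hv, s, hs, hps, h1, h2⟩
      by_cases hnear : v ≤ s + ℓ ∧ s ≤ v + ℓ
      · left; simp only [mem_filter, mem_range]
        exact ⟨hv, s, hs, hps, hnear.1, hnear.2⟩
      · right
        refine ⟨hv, ?_⟩
        have hsv : s ≠ v := by intro h; omega
        set u : ℕ := if s < v then v - 1 else v + 1 with hu
        have hun : u < n := by
          by_cases h : s < v <;> · simp [hu, h]; omega
        have hadj : pAdj u v := by
          by_cases h : s < v <;> simp [pAdj, hu, h] <;> omega
        have hus : u ≤ s + ℓ ∧ s ≤ u + ℓ := by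
          by_cases h : s < v <;> · simp [hu, h]; omega
        have hmem : u ∈ ((range n).filter (fun w => ∃ t, t < n ∧ p t = 1 ∧ w ≤ t + ℓ ∧ t ≤ w + ℓ)).filter fun w => pAdj w v := by
          simp only [mem_filter, mem_range]
          exact ⟨⟨hun, s, hs, hps, hus.1, hus.2⟩, hadj⟩
        have := card_pos.mpr ⟨u, hmem⟩
        omega

/-- in a path of `n` nodes, all with threshold 1, for any time bound
`lam ≥ 1` the minimum total incentive influencing everything within `lam` rounds
is `⌈n/(2lam+1)⌉`. -/
theorem path_threshold_one_min_cost (n lam : ℕ) (hlam : 1 ≤ lam) :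
    IsLeast {c : ℕ | ∃ p : ℕ → ℕ, (∀ v < n, p v ≤ 1) ∧
        infl (range n) (fun _ => 1) p lam = range n ∧
        c = ∑ v ∈ range n, p v}
      ((n + 2 * lam) / (2 * lam + 1)) := by
  set k := 2 * lam + 1 with hk
  have hkpos : 0 < k := by omega
  set m := (n + 2 * lam) / k with hm
  have hmk_le : m * k ≤ n + 2 * lam := Nat.div_mul_le_self _ _
  have hn_le : n ≤ m * k := by
    have h1 := Nat.div_add_mod (n + 2 * lam) k
    rw [← hm] at h1
    have h2 : (n + 2 * lam) % k < k := Nat.mod_lt _ hkpos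
    have h3 : k * m = m * k := Nat.mul_comm _ _
    omega
  constructor
  · -- membership
    rcases Nat.eq_zero_or_pos n with hn0 | hnpos
    · subst hn0
      refine ⟨fun _ => 0, by omega, ?_, ?_⟩
      · rw [infl_char 0 _ (by omega)]
        simp
      · simp [hm, Nat.div_eq_of_lt (by omega : 2 * lam < k)]
    · set f : ℕ → ℕ := fun i => min (i * k + lam) (n - 1) with hf
      set S : Finset ℕ := (range m).image f with hS
      refine ⟨fun v => if v ∈ S then 1 else 0, fun v _ => by dsimp only; split <;> omega, ?_, ?_⟩
      · rw [infl_char]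
        · rw [Finset.filter_true_of_mem]
          intro v hv
          rw [mem_range] at hv
          set i := v / k with hi
          have hik : k * i ≤ v := by rw [hi]; exact Nat.mul_div_le v k
          have hik2 : v < k * i + k := by
            have h1 := Nat.div_add_mod v k
            rw [← hi] at h1
            have h2 : v % k < k := Nat.mod_lt _ hkpos
            omega
          have him : i < m := by
            have : v < m * k := by omega
            have h3 : k * i = i * k := Nat.mul_comm _ _
            by_contra h
            push_neg at h
            have : m * k ≤ i * k := Nat.mul_le_mul_right _ h
            omega
          have hfS : f i ∈ S := mem_image_of_mem f (mem_range.mpr him)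
          refine ⟨f i, ?_, by simp [hfS], ?_, ?_⟩
          · have : f i ≤ n - 1 := min_le_right _ _
            omega
          · have h3 : k * i = i * k := Nat.mul_comm _ _
            rcases min_cases (i * k + lam) (n - 1) with ⟨h4, h5⟩ | ⟨h4, h5⟩ <;>
              simp only [hf] <;> omega
          · have h3 : k * i = i * k := Nat.mul_comm _ _
            rcases min_cases (i * k + lam) (n - 1) with ⟨h4, h5⟩ | ⟨h4, h5⟩ <;>
              simp only [hf] <;> omega
        · intro v _; split <;> omega
      · have hSsub : S ⊆ range n := by
          intro s hs
          simp only [hS, mem_image, mem_range] at hs ⊢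
          obtain ⟨i, _, rfl⟩ := hs
          have : f i ≤ n - 1 := min_le_right _ _
          omega
      -- sum = card S = m
        have key : ∀ a b : ℕ, a < b → b < m → f a < f b := by
          intro a b hab hbm
          have h1 : (a + 2) * k ≤ m * k := Nat.mul_le_mul_right _ (by omega)
          have h2 : (a + 1) * k ≤ b * k := Nat.mul_le_mul_right _ (by omega)
          have e1 : (a + 2) * k = a * k + 2 * k := by ring
          have e2 : (a + 1) * k = a * k + k := by ring
          simp only [hf]
          omega
        have hinj : Set.InjOn f (range m) := by
          intro i hi j hj hij
          rw [coe_range, Set.mem_Iio] at hi hj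
          rcases lt_trichotomy i j with h | h | h
          · have := key i j h hj; omega
          · exact h
          · have := key j i h hi; omega
        have hcard : S.card = m := by
          rw [hS, card_image_of_injOn hinj, card_range]
        rw [Finset.sum_ite_mem, Finset.inter_eq_right.mpr hSsub]
        simp [hcard]
  · -- lower bound
    rintro c ⟨p, hp, hinfl, rfl⟩
    rw [infl_char n p hp] at hinfl
    set T := (range n).filter (fun s => p s = 1) with hT
    have hcov : range n ⊆ T.biUnion (fun s => Icc (s - lam) (s + lam)) := by
      intro v hv
      have hv' := hv
      rw [← hinfl, mem_filter] at hv'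
      obtain ⟨_, s, hs, hps, h1, h2⟩ := hv'
      rw [mem_biUnion]
      exact ⟨s, by simp [hT, hs, hps], by rw [mem_Icc]; omega⟩
    have hnT : n ≤ T.card * k := by
      calc n = (range n).card := (card_range n).symm
        _ ≤ (T.biUnion (fun s => Icc (s - lam) (s + lam))).card := card_le_card hcov
        _ ≤ ∑ s ∈ T, (Icc (s - lam) (s + lam)).card := card_biUnion_le
        _ ≤ ∑ _s ∈ T, k := Finset.sum_le_sum (fun s _ => by rw [Nat.card_Icc]; omega)
        _ = T.card * k := by rw [Finset.sum_const, smul_eq_mul]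
    have hTc : T.card ≤ ∑ v ∈ range n, p v := by
      calc T.card = ∑ _s ∈ T, 1 := by simp
        _ = ∑ s ∈ T, p s := Finset.sum_congr rfl (fun s hs => by
            rw [hT, mem_filter] at hs; omega)
        _ ≤ ∑ v ∈ range n, p v := Finset.sum_le_sum_of_subset (filter_subset _ _)
    calc m ≤ (T.card * k + 2 * lam) / k := Nat.div_le_div_right (by omega)
      _ = 2 * lam / k + T.card := by
          rw [Nat.add_comm, Nat.add_mul_div_right _ _ hkpos]
      _ = T.card := by rw [Nat.div_eq_of_lt (by omega)]; omega
      _ ≤ ∑ v ∈ range n, p v := hTc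
end

section
/- Let L(j,k) be a subpath of a path L(0,n-1) with t(j)=t(k)=1 and t(i)=2 for j<i<k. For any incentive function p solving the TBI problem on L(0,n-1) (i.e., all nodes influenced within λ rounds): if both node j+1 and node k-1 receive influence from j and k respectively during the process, then Σ_{i=j+1}^{k-1} p(i) ≥ k−j−2; if exactly one of j+1, k-1 receives influence from its outer neighbor, then Σ_{i=j+1}^{k-1} p(i) ≥ k−j−1; if neither does, then Σ_{i=j+1}^{k-1} p(i) ≥ k−j. -/
open Finset

/-- The first round at which `v` is influenced (`sInf ∅ = 0` if never). -/
noncomputable def inflTime (S : Finset ℕ) (t p : ℕ → ℕ) (v : ℕ) : ℕ :=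
  sInf {ℓ | v ∈ infl S t p ℓ}

/-- `u` receives influence from its neighbour `w`: `w` is influenced strictly before
the round at which `u` becomes influenced. -/
noncomputable def recv (S : Finset ℕ) (t p : ℕ → ℕ) (u w : ℕ) : Prop :=
  inflTime S t p w < inflTime S t p u

lemma infl_mem_sInf (S : Finset ℕ) (t p : ℕ → ℕ) (v ℓ : ℕ) (h : v ∈ infl S t p ℓ) :
    v ∈ infl S t p (inflTime S t p v) :=
  Nat.sInf_mem (⟨ℓ, h⟩ : {m : ℕ | v ∈ infl S t p m}.Nonempty)

lemma inflTime_le_of_mem (S : Finset ℕ) (t p : ℕ → ℕ) (v ℓ : ℕ) (h : v ∈ infl S t p ℓ) :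
    inflTime S t p v ≤ ℓ :=
  Nat.sInf_le (h : ℓ ∈ {m : ℕ | v ∈ infl S t p m})

lemma not_mem_infl_of_lt (S : Finset ℕ) (t p : ℕ → ℕ) (v ℓ : ℕ) (h : ℓ < inflTime S t p v) :
    v ∉ infl S t p ℓ :=
  Nat.notMem_of_lt_sInf (s := {m : ℕ | v ∈ infl S t p m}) h

/-- lower bounds on the incentives placed on the internal nodes of a
2-path `L(j,k)`, according to whether the extremal internal nodes `j+1` and `k-1`
receive influence from the endpoints `j` and `k`. -/
theorem two_path_internal_incentive_lower_bounds (n lam j k : ℕ) (t p : ℕ → ℕ)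
    (hjk : j + 1 < k) (hkn : k < n)
    (ht0 : t 0 = 1) (htn : t (n - 1) = 1) (htr : ∀ v < n, t v = 1 ∨ t v = 2)
    (htj : t j = 1) (htk : t k = 1) (htint : ∀ i, j < i → i < k → t i = 2)
    (hp : ∀ v < n, p v ≤ t v)
    (hcov : infl (range n) t p lam = range n) :
    (recv (range n) t p (j + 1) j ∧ recv (range n) t p (k - 1) k →
      k - j - 2 ≤ ∑ i ∈ Ioo j k, p i) ∧
    (Xor' (recv (range n) t p (j + 1) j) (recv (range n) t p (k - 1) k) →
      k - j - 1 ≤ ∑ i ∈ Ioo j k, p i) ∧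
    (¬ recv (range n) t p (j + 1) j ∧ ¬ recv (range n) t p (k - 1) k →
      k - j ≤ ∑ i ∈ Ioo j k, p i) := by
  set S := range n with hSdef
  set q : ℕ → ℕ := fun v => if inflTime S t p (v - 1) < inflTime S t p v then 1 else 0 with hq
  set r : ℕ → ℕ := fun v => if inflTime S t p (v + 1) < inflTime S t p v then 1 else 0 with hr
  -- per-node bound
  have key : ∀ v, j < v → v < k → 2 ≤ p v + (q v + r v) := by
    intro v hjv hvk
    have hvn : v < n := hvk.trans hkn
    have htv : t v = 2 := htint v hjv hvk
    have hpv : p v ≤ 2 := htv ▸ hp v hvn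
    have hmem : v ∈ infl S t p lam := by rw [hcov]; exact mem_range.mpr hvn
    have hTmem : v ∈ infl S t p (inflTime S t p v) := infl_mem_sInf S t p v lam hmem
    rcases hTe : inflTime S t p v with _ | m
    · rw [hTe] at hTmem
      simp only [infl, mem_filter] at hTmem
      omega
    · rw [hTe] at hTmem
      have hnot : v ∉ infl S t p m := not_mem_infl_of_lt S t p v m (by omega)
      simp only [infl, mem_union, mem_filter] at hTmem
      rcases hTmem with h | ⟨_, hcard⟩
      · exact absurd h hnot
      · have hsub : (infl S t p m).filter (fun u => pAdj u v) ⊆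
            ({v - 1, v + 1} : Finset ℕ).filter
              (fun u => inflTime S t p u < inflTime S t p v) := by
          intro u hu
          rw [mem_filter] at hu ⊢
          obtain ⟨hu1, hu2⟩ := hu
          have htime : inflTime S t p u ≤ m := inflTime_le_of_mem S t p u m hu1
          refine ⟨?_, by omega⟩
          rcases hu2 with h | h <;> simp [mem_insert, mem_singleton] <;> omega
        have hcard2 : (({v - 1, v + 1} : Finset ℕ).filter
            (fun u => inflTime S t p u < inflTime S t p v)).card ≤ q v + r v := by
          have hne2 : v - 1 ≠ v + 1 := by omega
          simp only [hq, hr]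
          by_cases h1 : inflTime S t p (v - 1) < inflTime S t p v <;>
            by_cases h2 : inflTime S t p (v + 1) < inflTime S t p v <;>
            simp [filter_insert, filter_singleton, h1, h2, hne2]
        have := (card_le_card hsub).trans hcard2
        omega
  -- edge bound
  have hedge : ∀ v, r v + q (v + 1) ≤ 1 := by
    intro v
    simp only [hq, hr, Nat.add_sub_cancel]
    split_ifs with h1 h2
    · exact absurd h2 (lt_asymm h1)
    all_goals omega
  obtain ⟨e, he⟩ : ∃ e, k - (j + 1) = e + 1 := ⟨k - j - 2, by omega⟩
  have hIoo : Ioo j k = Ico (j + 1) k := (Finset.Ico_add_one_left_eq_Ioo ..).symm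
  -- sum bounds
  have hsum1 : ∀ f : ℕ → ℕ, ∑ i ∈ Ioo j k, f i = ∑ i ∈ range (e + 1), f (j + 1 + i) := by
    intro f
    rw [hIoo, Finset.sum_Ico_eq_sum_range, he]
  have hq_split : ∑ i ∈ range (e + 1), q (j + 1 + i)
      = (∑ i ∈ range e, q (j + 1 + (i + 1))) + q (j + 1 + 0) := Finset.sum_range_succ' _ _
  have hr_split : ∑ i ∈ range (e + 1), r (j + 1 + i)
      = (∑ i ∈ range e, r (j + 1 + i)) + r (j + 1 + e) := Finset.sum_range_succ _ _
  have hmid : (∑ i ∈ range e, r (j + 1 + i)) + (∑ i ∈ range e, q (j + 1 + (i + 1))) ≤ e := by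
    rw [← Finset.sum_add_distrib]
    calc ∑ i ∈ range e, (r (j + 1 + i) + q (j + 1 + (i + 1)))
        ≤ ∑ _i ∈ range e, 1 := Finset.sum_le_sum (fun i _ => by
          have := hedge (j + 1 + i)
          have hx : j + 1 + i + 1 = j + 1 + (i + 1) := by omega
          rw [hx] at this
          exact this)
      _ = e := by simp
  have hlow : 2 * (e + 1) ≤ (∑ i ∈ Ioo j k, p i) + ((∑ i ∈ Ioo j k, q i) + ∑ i ∈ Ioo j k, r i) := by
    have : ∑ i ∈ Ioo j k, (2 : ℕ) ≤ ∑ i ∈ Ioo j k, (p i + (q i + r i)) :=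
      Finset.sum_le_sum (fun i hi => by
        rw [mem_Ioo] at hi; exact key i hi.1 hi.2)
    simp only [Finset.sum_add_distrib, Finset.sum_const, Nat.card_Ioo, smul_eq_mul] at this
    have hcard : (k - j - 1) = e + 1 := by omega
    rw [hcard] at this
    omega
  have hke : j + 1 + e = k - 1 := by omega
  have master : k - j ≤ (∑ i ∈ Ioo j k, p i) + (q (j + 1) + r (k - 1)) := by
    have h1 := hsum1 q
    have h2 := hsum1 r
    rw [hq_split] at h1
    rw [hr_split, hke] at h2
    have hq0 : j + 1 + 0 = j + 1 := by omega
    rw [hq0] at h1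
    omega
  -- translate recv to the indicator conditions
  have hrecvj : recv S t p (j + 1) j ↔ q (j + 1) = 1 := by
    simp only [hq, Nat.add_sub_cancel]
    unfold recv
    split_ifs with h <;> simp [h]
  have hrecvk : recv S t p (k - 1) k ↔ r (k - 1) = 1 := by
    have hk1 : k - 1 + 1 = k := by omega
    simp only [hr, hk1]
    unfold recv
    split_ifs with h <;> simp [h]
  have hq01 : q (j + 1) = 0 ∨ q (j + 1) = 1 := by simp only [hq]; split_ifs <;> simp
  have hr01 : r (k - 1) = 0 ∨ r (k - 1) = 1 := by simp only [hr]; split_ifs <;> simp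
  refine ⟨?_, ?_, ?_⟩
  · rintro ⟨h1, h2⟩
    rw [hrecvj] at h1; rw [hrecvk] at h2
    omega
  · rintro (⟨h1, h2⟩ | ⟨h1, h2⟩)
    · rw [hrecvj] at h1; rw [hrecvk] at h2; omega
    · rw [hrecvk] at h1; rw [hrecvj] at h2; omega
  · rintro ⟨h1, h2⟩
    rw [hrecvj] at h1; rw [hrecvk] at h2
    omega
end

section
/- In a sequence of node subsets modeling path influence: Σ_{i=j+1}^{k-1} inf(i) ≤ k−j if both j+1 and k−1 receive influence from j and k; ≤ k−j−1 if exactly one of them receives outer influence; ≤ k−j−2 otherwise; where inf(i) counts neighbors of i influenced before i. -/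
open Finset

/-- `nInf S t p i` = number of neighbours of `i` influenced strictly before `i`. -/
noncomputable def nInf (S : Finset ℕ) (t p : ℕ → ℕ) (i : ℕ) : ℕ :=
  (S.filter fun u => pAdj u i ∧ inflTime S t p u < inflTime S t p i).card

/-- upper bounds on the total influence received by the internal nodes
of the subpath `L(j,k)`, according to whether `j+1` and `k-1` receive influence from
the endpoints `j` and `k`. -/
theorem two_path_received_influence_upper_bounds (n lam j k : ℕ) (t p : ℕ → ℕ)
    (hjk : j + 1 < k) (hkn : k < n)
    (hcov : infl (range n) t p lam = range n) :
    (recv (range n) t p (j + 1) j ∧ recv (range n) t p (k - 1) k →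
      ∑ i ∈ Ioo j k, nInf (range n) t p i ≤ k - j) ∧
    (Xor' (recv (range n) t p (j + 1) j) (recv (range n) t p (k - 1) k) →
      ∑ i ∈ Ioo j k, nInf (range n) t p i ≤ k - j - 1) ∧
    (¬ recv (range n) t p (j + 1) j ∧ ¬ recv (range n) t p (k - 1) k →
      ∑ i ∈ Ioo j k, nInf (range n) t p i ≤ k - j - 2) := by

  classical
  set T := inflTime (range n) t p with hT
  set g : ℕ → ℕ → ℕ := fun a b => if T a < T b then 1 else 0 with hg
  have hgsum : ∀ a b, g a b + g b a ≤ 1 := by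
    intro a b
    simp only [hg]
    split <;> split <;> omega
  have hnle : ∀ i, 1 ≤ i → nInf (range n) t p i ≤ g (i - 1) i + g (i + 1) i := by
    intro i hi
    have hdef : nInf (range n) t p i
        = ((range n).filter fun u => pAdj u i ∧ T u < T i).card := rfl
    have hsub : ((range n).filter fun u => pAdj u i ∧ T u < T i) ⊆
        ({i - 1, i + 1} : Finset ℕ).filter (fun u => T u < T i) := by
      intro u hu
      simp only [mem_filter, mem_range, mem_insert, mem_singleton] at hu ⊢
      rcases hu with ⟨_, hadj, hlt⟩
      refine ⟨?_, hlt⟩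
      rcases hadj with h | h <;> omega
    have hcard : (({i - 1, i + 1} : Finset ℕ).filter (fun u => T u < T i)).card
        ≤ g (i - 1) i + g (i + 1) i := by
      have hne : i - 1 ≠ i + 1 := by omega
      rw [Finset.filter_insert, Finset.filter_singleton]
      simp only [hg]
      split <;> split <;> simp [hne]
    calc nInf (range n) t p i
        ≤ (({i - 1, i + 1} : Finset ℕ).filter (fun u => T u < T i)).card := by
          rw [hdef]; exact Finset.card_le_card hsub
      _ ≤ g (i - 1) i + g (i + 1) i := hcard
  have key : ∀ m, 1 ≤ m →
      ∑ r ∈ range m, (g (j + r) (j + 1 + r) + g (j + 2 + r) (j + 1 + r)) ≤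
      (m - 1) + g j (j + 1) + g (j + 1 + m) (j + m) := by
    intro m hm
    induction m with
    | zero => omega
    | succ m ih =>
      rcases Nat.lt_or_ge 1 (m + 1) with h1 | h1
      · have hm1 : 1 ≤ m := by omega
        rw [Finset.sum_range_succ]
        have hih := ih hm1
        have h2 := hgsum (j + 1 + m) (j + m)
        have e1 : j + 1 + (m + 1) = j + 2 + m := by omega
        have e2 : j + (m + 1) = j + 1 + m := by omega
        rw [e1, e2]
        omega
      · have hm0 : m = 0 := by omega
        subst hm0
        simp only [Finset.sum_range_succ, Finset.sum_range_zero, Nat.zero_add]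
        have e1 : j + 1 + 1 = j + 2 := by omega
        have e2 : j + 2 + 0 = j + 2 := by omega
        have e3 : j + 0 = j := by omega
        have e4 : j + 1 + 0 = j + 1 := by omega
        rw [e1, e2, e3, e4]
        omega
  set m := k - j - 1 with hm
  have hm1 : 1 ≤ m := by omega
  have hkm : k = j + 1 + m := by omega
  have hsum : ∑ i ∈ Ioo j k, nInf (range n) t p i ≤
      (k - j - 2) + g j (j + 1) + g k (k - 1) := by
    have hIoo : Ioo j k = Ico (j + 1) k := by
      ext x; simp only [Finset.mem_Ioo, Finset.mem_Ico]; omega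
    rw [hIoo, Finset.sum_Ico_eq_sum_range]
    have hrange : k - (j + 1) = m := by omega
    rw [hrange]
    calc ∑ r ∈ range m, nInf (range n) t p (j + 1 + r)
        ≤ ∑ r ∈ range m, (g (j + r) (j + 1 + r) + g (j + 2 + r) (j + 1 + r)) := by
          apply Finset.sum_le_sum
          intro r hr
          have h := hnle (j + 1 + r) (by omega)
          have e1 : j + 1 + r - 1 = j + r := by omega
          have e2 : j + 1 + r + 1 = j + 2 + r := by omega
          rwa [e1, e2] at h
      _ ≤ (m - 1) + g j (j + 1) + g (j + 1 + m) (j + m) := key m hm1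
      _ = (k - j - 2) + g j (j + 1) + g k (k - 1) := by
          have e1 : m - 1 = k - j - 2 := by omega
          have e2 : j + 1 + m = k := by omega
          have e3 : j + m = k - 1 := by omega
          rw [e1, e2, e3]
  have hr1 : recv (range n) t p (j + 1) j ↔ T j < T (j + 1) := Iff.rfl
  have hr2 : recv (range n) t p (k - 1) k ↔ T k < T (k - 1) := Iff.rfl
  refine ⟨?_, ?_, ?_⟩
  · rintro ⟨ha, hb⟩
    rw [hr1] at ha; rw [hr2] at hb
    have : g j (j + 1) ≤ 1 := by simp only [hg]; split <;> omega
    have : g k (k - 1) ≤ 1 := by simp only [hg]; split <;> omega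
    omega
  · rintro (⟨ha, hb⟩ | ⟨ha, hb⟩)
    · rw [hr1] at ha; rw [hr2] at hb
      have hga : g j (j + 1) ≤ 1 := by simp only [hg]; split <;> omega
      have hgb : g k (k - 1) = 0 := by simp only [hg, if_neg hb]
      omega
    · rw [hr2] at ha; rw [hr1] at hb
      have hga : g j (j + 1) = 0 := by simp only [hg, if_neg hb]
      have hgb : g k (k - 1) ≤ 1 := by simp only [hg]; split <;> omega
      omega
  · rintro ⟨ha, hb⟩
    rw [hr1] at ha; rw [hr2] at hb
    have hga : g j (j + 1) = 0 := by simp only [hg, if_neg ha]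
    have hgb : g k (k - 1) = 0 := by simp only [hg, if_neg hb]
    omega
end

section
/- Let OPT_{←}(j,k) be the optimal TBI cost on subpath L(j,k) assuming node k receives one unit of influence from node k+1, and OPT_{→ℓ}(j,k) the optimal cost assuming node k is influenced by round λ−ℓ without influence from k+1. If t(k)=1, then for all 1 ≤ ℓ < ℓ' ≤ λ: OPT_{←}(j,k) ≤ OPT(j,k) ≤ OPT_{→ℓ}(j,k) ≤ OPT_{→ℓ'}(j,k) ≤ OPT_{←}(j,k) + 1. -/
open Finset

/-- `OPT t lam j k`: minimum cost of incentives influencing all of the subpath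
`L(j,k)` within `lam` rounds. -/
noncomputable def OPT (t : ℕ → ℕ) (lam j k : ℕ) : ℕ :=
  sInf {c : ℕ | ∃ p : ℕ → ℕ, (∀ i ∈ Icc j k, p i ≤ t i) ∧
    infl (Icc j k) t p lam = Icc j k ∧ c = ∑ i ∈ Icc j k, p i}

/-- `OPTcon t lam j k ℓ v`: minimum cost of incentives influencing all of the subpath
`L(j,k)` within `lam` rounds, with the additional requirement that the endpoint `v` is
influenced by round `lam - ℓ` (using only influence from within `L(j,k)`). -/
noncomputable def OPTcon (t : ℕ → ℕ) (lam j k ℓ v : ℕ) : ℕ :=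
  sInf {c : ℕ | ∃ p : ℕ → ℕ, (∀ i ∈ Icc j k, p i ≤ t i) ∧
    infl (Icc j k) t p lam = Icc j k ∧ v ∈ infl (Icc j k) t p (lam - ℓ) ∧
    c = ∑ i ∈ Icc j k, p i}

/-- `OPTleft t lam j k`: as `OPT`, but the right endpoint `k` receives one unit of
influence from `k+1`, i.e. its threshold is reduced by one. -/
noncomputable def OPTleft (t : ℕ → ℕ) (lam j k : ℕ) : ℕ :=
  sInf {c : ℕ | ∃ p : ℕ → ℕ,
    (∀ i ∈ Icc j k, p i ≤ Function.update t k (t k - 1) i) ∧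
    infl (Icc j k) (Function.update t k (t k - 1)) p lam = Icc j k ∧
    c = ∑ i ∈ Icc j k, p i}

lemma infl_subset (S : Finset ℕ) (t p : ℕ → ℕ) : ∀ m, infl S t p m ⊆ S
  | 0 => Finset.filter_subset _ _
  | m + 1 => Finset.union_subset (infl_subset S t p m) (Finset.filter_subset _ _)

lemma infl_mono (S : Finset ℕ) (t p : ℕ → ℕ) {m m' : ℕ} (h : m ≤ m') :
    infl S t p m ⊆ infl S t p m' := by
  induction h with
  | refl => exact subset_rfl
  | step _ ih => exact ih.trans Finset.subset_union_left

lemma infl_le (S : Finset ℕ) (t1 p1 t2 p2 : ℕ → ℕ)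
    (h0 : ∀ v ∈ S, p1 v = t1 v → p2 v = t2 v)
    (ht : ∀ v ∈ S, t2 v - p2 v ≤ t1 v - p1 v) :
    ∀ m, infl S t1 p1 m ⊆ infl S t2 p2 m := by
  intro m
  induction m with
  | zero =>
    intro x hx
    rw [infl, Finset.mem_filter] at hx ⊢
    exact ⟨hx.1, h0 x hx.1 hx.2⟩
  | succ m ih =>
    intro x hx
    rw [infl, Finset.mem_union] at hx ⊢
    rcases hx with hx | hx
    · exact Or.inl (ih hx)
    · rw [Finset.mem_filter] at hx ⊢
      refine Or.inr ⟨hx.1, le_trans (ht x hx.1) (le_trans hx.2 ?_)⟩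
      exact Finset.card_le_card (Finset.filter_subset_filter _ ih)

/-- Full influence with `p = t`. -/
lemma infl_full (S : Finset ℕ) (t : ℕ → ℕ) (m : ℕ) : infl S t t m = S := by
  have h0 : infl S t t 0 = S := by rw [infl]; simp
  have h := infl_mono S t t (Nat.zero_le m)
  rw [h0] at h
  exact Finset.Subset.antisymm (infl_subset S t t m) h

/-- if `t k = 1` then for all `1 ≤ ℓ < ℓ' ≤ lam`,
`OPT_←(j,k) ≤ OPT(j,k) ≤ OPT_→ℓ(j,k) ≤ OPT_→ℓ'(j,k) ≤ OPT_←(j,k) + 1`. -/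
theorem opt_variants_chain (n lam j k ℓ ℓ' : ℕ) (t : ℕ → ℕ)
    (hjk : j ≤ k) (hkn : k < n) (htr : ∀ v < n, t v = 1 ∨ t v = 2) (htk : t k = 1)
    (h1 : 1 ≤ ℓ) (h2 : ℓ < ℓ') (h3 : ℓ' ≤ lam) :
    OPTleft t lam j k ≤ OPT t lam j k ∧
    OPT t lam j k ≤ OPTcon t lam j k ℓ k ∧
    OPTcon t lam j k ℓ k ≤ OPTcon t lam j k ℓ' k ∧
    OPTcon t lam j k ℓ' k ≤ OPTleft t lam j k + 1 := by
  have hk : k ∈ Icc j k := Finset.mem_Icc.2 ⟨hjk, le_rfl⟩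
  have ht'k : Function.update t k (t k - 1) k = 0 := by simp [htk]
  -- nonemptiness witnesses
  have hOPT_ne : {c : ℕ | ∃ p : ℕ → ℕ, (∀ i ∈ Icc j k, p i ≤ t i) ∧
      infl (Icc j k) t p lam = Icc j k ∧ c = ∑ i ∈ Icc j k, p i}.Nonempty :=
    ⟨_, t, fun i _ => le_rfl, infl_full _ _ _, rfl⟩
  have hcon_ne : ∀ l, {c : ℕ | ∃ p : ℕ → ℕ, (∀ i ∈ Icc j k, p i ≤ t i) ∧
      infl (Icc j k) t p lam = Icc j k ∧ k ∈ infl (Icc j k) t p (lam - l) ∧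
      c = ∑ i ∈ Icc j k, p i}.Nonempty := by
    intro l
    refine ⟨_, t, fun i _ => le_rfl, infl_full _ _ _, ?_, rfl⟩
    rw [infl_full]; exact hk
  have hleft_ne : {c : ℕ | ∃ p : ℕ → ℕ,
      (∀ i ∈ Icc j k, p i ≤ Function.update t k (t k - 1) i) ∧
      infl (Icc j k) (Function.update t k (t k - 1)) p lam = Icc j k ∧
      c = ∑ i ∈ Icc j k, p i}.Nonempty :=
    ⟨_, Function.update t k (t k - 1), fun i _ => le_rfl, infl_full _ _ _, rfl⟩
  refine ⟨?_, ?_, ?_, ?_⟩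
  · -- OPTleft ≤ OPT
    obtain ⟨p, hp, hfull, hc⟩ := Nat.sInf_mem hOPT_ne
    have step : OPTleft t lam j k ≤ ∑ i ∈ Icc j k, Function.update p k 0 i := by
      refine Nat.sInf_le ⟨Function.update p k 0, ?_, ?_, rfl⟩
      · intro i hi
        rcases eq_or_ne i k with rfl | h
        · simp
        · simp [Function.update_of_ne h, hp i hi]
      · refine Finset.Subset.antisymm (infl_subset _ _ _ _) ?_
        have h2' := infl_le (Icc j k) t p (Function.update t k (t k - 1))
          (Function.update p k 0) ?_ ?_ lam
        · rw [hfull] at h2'; exact h2'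
        · intro v _ hv
          rcases eq_or_ne v k with rfl | h
          · simp [htk]
          · simp [Function.update_of_ne h, hv]
        · intro v _
          rcases eq_or_ne v k with rfl | h
          · simp [htk]
          · simp [Function.update_of_ne h]
    refine step.trans ?_
    rw [show OPT t lam j k = ∑ i ∈ Icc j k, p i from hc]
    refine Finset.sum_le_sum fun i _ => ?_
    rcases eq_or_ne i k with rfl | h
    · simp
    · simp [Function.update_of_ne h]
  · -- OPT ≤ OPTcon ℓ
    obtain ⟨p, hp, hfull, _, hc⟩ := Nat.sInf_mem (hcon_ne ℓ)
    exact le_trans (Nat.sInf_le ⟨p, hp, hfull, hc⟩) le_rfl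
  · -- OPTcon ℓ ≤ OPTcon ℓ'
    obtain ⟨p, hp, hfull, hkin, hc⟩ := Nat.sInf_mem (hcon_ne ℓ')
    refine le_trans (Nat.sInf_le ⟨p, hp, hfull, ?_, hc⟩) le_rfl
    exact infl_mono _ _ _ (Nat.sub_le_sub_left (le_of_lt h2) lam) hkin
  · -- OPTcon ℓ' ≤ OPTleft + 1
    obtain ⟨p, hp, hfull, hc⟩ := Nat.sInf_mem hleft_ne
    have hpk : p k = 0 := by
      have := hp k hk; simpa [htk] using this
    refine Nat.sInf_le ⟨Function.update p k 1, ?_, ?_, ?_, ?_⟩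
    · intro i hi
      rcases eq_or_ne i k with rfl | h
      · simp [htk]
      · have := hp i hi
        simpa [Function.update_of_ne h] using this
    · refine Finset.Subset.antisymm (infl_subset _ _ _ _) ?_
      have h2' := infl_le (Icc j k) (Function.update t k (t k - 1)) p t
        (Function.update p k 1) ?_ ?_ lam
      · rw [hfull] at h2'; exact h2'
      · intro v _ hv
        rcases eq_or_ne v k with rfl | h
        · simp [htk]
        · have : p v = t v := by simpa [Function.update_of_ne h] using hv
          simp [Function.update_of_ne h, this]
      · intro v _
        rcases eq_or_ne v k with rfl | h
        · simp [htk]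
        · simp [Function.update_of_ne h]
    · have h0 : k ∈ infl (Icc j k) t (Function.update p k 1) 0 := by
        rw [infl, Finset.mem_filter]
        exact ⟨hk, by simp [htk]⟩
      exact infl_mono _ _ _ (Nat.zero_le _) h0
    · have hOL : OPTleft t lam j k = ∑ i ∈ Icc j k, p i := hc
      rw [Finset.sum_update_of_mem hk, hOL]
      have hsum : ∑ i ∈ Icc j k, p i = p k + ∑ i ∈ (Icc j k) \ {k}, p i :=
        Finset.sum_eq_add_sum_sdiff_singleton_of_mem hk _
      rw [hsum, hpk]
      ring
end
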